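/- In the PRST scheme, the subtree budget identity holds: for every non-root node i, ω_i + Σ_{j ∈ C_i} ω_j = ((|C_i|+1)/|C_{p_i}|)·Ω_{p_i}. -/
import Mathlib


/-- PRST subtree budget identity: for every non-root node i,
ω_i + Σ_{j ∈ C_i} ω_j = ((|C_i|+1)/|C_{p_i}|)·Ω_{p_i}. -/
theorem prst_subtree_budget {V : Type*} [Fintype V] (s : V) (p : V → V) (C : V → Finset V)
    (ω Ω : V → ℝ) (α : ℝ) (hα0 : 0 < α) (hα1 : α < 1)
    (hroot : p s = s)
    (hreach : ∀ v, ∃ n, p^[n] v = s)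
    (hC : ∀ i j, j ∈ C i ↔ j ≠ i ∧ ∃ n, p^[n] j = i)
    (hΩs : Ω s = 1)
    (hω : ∀ i, i ≠ s → ω i =
      Ω (p i) * (1 / (((C (p i)).card : ℝ) - ((C i).card : ℝ)) +
        ((((C i).card : ℝ) + 1) / ((C (p i)).card : ℝ) -
          1 / (((C (p i)).card : ℝ) - ((C i).card : ℝ))) * α))
    (hΩ : ∀ i, i ≠ s → Ω i =
      Ω (p i) * ((((C i).card : ℝ) + 1) / ((C (p i)).card : ℝ) -
        1 / (((C (p i)).card : ℝ) - ((C i).card : ℝ))) * (1 - α)) :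
    ∀ i, i ≠ s →
      ω i + ∑ j ∈ C i, ω j = ((((C i).card : ℝ) + 1) / ((C (p i)).card : ℝ)) * Ω (p i) := by
  classical
  -- no non-root node lies on a cycle
  have hfix : ∀ i, i ≠ s → ∀ n, 1 ≤ n → p^[n] i ≠ i := by
    intro i hi n hn hcyc
    obtain ⟨N, hN⟩ := hreach i
    apply hi
    have key : ∀ m, p^[m * n] i = i := by
      intro m
      induction m with
      | zero => simp
      | succ m ih => rw [Nat.succ_mul, Function.iterate_add_apply, hcyc, ih]
    have h1 : p^[N * n] i = i := key N
    have h4 : (N * n - N) + N = N * n :=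
      Nat.sub_add_cancel (Nat.le_mul_of_pos_right N hn)
    have h2 : p^[(N * n - N) + N] i = p^[N * n - N] s := by
      rw [Function.iterate_add_apply, hN]
    rw [h4, h1] at h2
    rw [h2, Function.iterate_fixed hroot]
  have hpi : ∀ i, i ≠ s → p i ≠ i := by
    intro i hi h
    exact hfix i hi 1 le_rfl (by simpa using h)
  have hmemC : ∀ i, i ≠ s → i ∈ C (p i) := by
    intro i hi
    rw [hC]
    exact ⟨Ne.symm (hpi i hi), 1, by simp⟩
  -- helper: membership in insert c (C c) gives an iterate witness
  have hmem_iter : ∀ c j, j ∈ insert c (C c) → ∃ m, p^[m] j = c := by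
    intro c j hj
    rcases Finset.mem_insert.mp hj with rfl | hj
    · exact ⟨0, rfl⟩
    · exact ((hC c j).mp hj).2
  -- partition of C i into children subtrees
  have hpart : ∀ i, i ≠ s →
      C i = (Finset.univ.filter fun c => p c = i ∧ c ≠ i).biUnion
        (fun c => insert c (C c)) := by
    intro i hi
    ext j
    simp only [Finset.mem_biUnion, Finset.mem_filter, Finset.mem_univ, true_and,
      Finset.mem_insert]
    constructor
    · intro hj
      rw [hC] at hj
      obtain ⟨hji, hex⟩ := hj
      have hne : Nat.find hex ≠ 0 := by
        intro h0
        have hsp := Nat.find_spec hex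
        rw [h0] at hsp
        exact hji hsp
      set n := Nat.find hex with hn
      have hnpos : 0 < n := Nat.pos_of_ne_zero hne
      refine ⟨p^[n - 1] j, ⟨?_, ?_⟩, ?_⟩
      · have hsp : p^[n] j = i := Nat.find_spec hex
        rw [← hsp]
        conv_rhs => rw [show n = (n - 1) + 1 from (Nat.succ_pred_eq_of_pos hnpos).symm]
        rw [Function.iterate_succ_apply']
      · intro h
        exact Nat.find_min hex (Nat.sub_lt hnpos one_pos) h
      · by_cases hjc : j = p^[n - 1] j
        · exact Or.inl hjc
        · right
          rw [hC]
          exact ⟨hjc, n - 1, rfl⟩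
    · rintro ⟨c, ⟨hpc, hci⟩, hjc⟩
      rw [hC]
      rcases hjc with rfl | hjc
      · exact ⟨hci, 1, by simpa using hpc⟩
      · rw [hC] at hjc
        obtain ⟨hjc', m, hm⟩ := hjc
        refine ⟨?_, m + 1, ?_⟩
        · rintro rfl
          apply hfix j hi (m + 1) (Nat.le_add_left 1 m)
          rw [Function.iterate_succ_apply', hm, hpc]
        · rw [Function.iterate_succ_apply', hm, hpc]
  -- disjointness of the children subtrees
  have hkey : ∀ i, i ≠ s → ∀ c c' : V, p c = i → c ≠ i → p c' = i → c' ≠ i →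
      ∀ j m m', m ≤ m' → p^[m] j = c → p^[m'] j = c' → c = c' := by
    intro i hi c c' hpc hci hpc' hci' j m m' hmm hm hm'
    have h1 : p^[m' - m] c = c' := by
      rw [← hm, ← Function.iterate_add_apply, Nat.sub_add_cancel hmm, hm']
    rcases Nat.eq_zero_or_pos (m' - m) with h0 | hpos
    · rw [h0] at h1; exact h1
    · exfalso
      obtain ⟨t, ht⟩ := Nat.exists_eq_add_of_lt hpos
      rw [show m' - m = t + 1 by omega] at h1
      rw [Function.iterate_succ_apply, hpc] at h1
      apply hfix i hi (t + 1) (Nat.le_add_left 1 t)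
      rw [Function.iterate_succ_apply', h1, hpc']
  have hdisj : ∀ i, i ≠ s →
      ∀ c ∈ (Finset.univ.filter fun c => p c = i ∧ c ≠ i),
      ∀ c' ∈ (Finset.univ.filter fun c => p c = i ∧ c ≠ i),
      c ≠ c' → Disjoint (insert c (C c)) (insert c' (C c')) := by
    intro i hi c hc c' hc' hne
    simp only [Finset.mem_filter, Finset.mem_univ, true_and] at hc hc'
    rw [Finset.disjoint_left]
    intro j hj hj'
    obtain ⟨m, hm⟩ := hmem_iter c j hj
    obtain ⟨m', hm'⟩ := hmem_iter c' j hj'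
    rcases le_total m m' with h | h
    · exact hne (hkey i hi c c' hc.1 hc.2 hc'.1 hc'.2 j m m' h hm hm')
    · exact hne (hkey i hi c' c hc'.1 hc'.2 hc.1 hc.2 j m' m h hm' hm).symm
  have hnotself : ∀ c : V, c ∉ C c := by
    intro c hc
    exact ((hC c c).mp hc).1 rfl
  -- cardinality identity
  have hcard : ∀ i, i ≠ s →
      ((C i).card : ℝ) =
        ∑ c ∈ (Finset.univ.filter fun c => p c = i ∧ c ≠ i), (((C c).card : ℝ) + 1) := by
    intro i hi
    rw [hpart i hi, Finset.card_biUnion (hdisj i hi)]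
    push_cast
    refine Finset.sum_congr rfl fun c _ => ?_
    rw [Finset.card_insert_of_notMem (hnotself c)]
    push_cast
    ring
  -- subtrees are strictly smaller
  have hlt : ∀ i, i ≠ s → ∀ c ∈ (Finset.univ.filter fun c => p c = i ∧ c ≠ i),
      (C c).card < (C i).card := by
    intro i hi c hc
    have hsub : insert c (C c) ⊆ C i := by
      rw [hpart i hi]
      exact Finset.subset_biUnion_of_mem (fun c => insert c (C c)) hc
    have hcc : C c ⊆ C i := fun x hx => hsub (Finset.mem_insert_of_mem hx)
    have hcmem : c ∈ C i := hsub (Finset.mem_insert_self c (C c))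
    refine Finset.card_lt_card ?_
    rw [Finset.ssubset_iff_of_subset hcc]
    exact ⟨c, hcmem, hnotself c⟩
  -- children are non-root
  have hcs : ∀ i, i ≠ s → ∀ c ∈ (Finset.univ.filter fun c => p c = i ∧ c ≠ i), c ≠ s := by
    intro i hi c hc hcseq
    subst hcseq
    simp only [Finset.mem_filter, Finset.mem_univ, true_and] at hc
    rw [hroot] at hc
    exact hi hc.1.symm
  -- leaf case
  have leaf : ∀ i, i ≠ s → C i = ∅ →
      ω i + ∑ j ∈ C i, ω j = ((((C i).card : ℝ) + 1) / ((C (p i)).card : ℝ)) * Ω (p i) := by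
    intro i hi hCe
    rw [hCe, hω i hi, hCe]
    simp only [Finset.sum_empty, Finset.card_empty, Nat.cast_zero, add_zero]
    ring
  suffices H : ∀ n : ℕ, ∀ i, i ≠ s → (C i).card ≤ n →
      ω i + ∑ j ∈ C i, ω j = ((((C i).card : ℝ) + 1) / ((C (p i)).card : ℝ)) * Ω (p i) by
    exact fun i hi => H (C i).card i hi le_rfl
  intro n
  induction n with
  | zero =>
    intro i hi hc0
    exact leaf i hi (Finset.card_eq_zero.mp (Nat.le_zero.mp hc0))
  | succ n IH =>
    intro i hi hcn
    by_cases h0 : (C i).card = 0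
    · exact leaf i hi (Finset.card_eq_zero.mp h0)
    · have hD : ((C i).card : ℝ) ≠ 0 := Nat.cast_ne_zero.mpr h0
      have hpd : Set.PairwiseDisjoint
          ↑(Finset.univ.filter fun c => p c = i ∧ c ≠ i)
          (fun c => insert c (C c)) := by
        intro c hc c' hc' hne
        exact hdisj i hi c (Finset.mem_coe.mp hc) c' (Finset.mem_coe.mp hc') hne
      have hterm : ∀ c ∈ (Finset.univ.filter fun c => p c = i ∧ c ≠ i),
          ∑ j ∈ insert c (C c), ω j = (((C c).card : ℝ) + 1) / ((C i).card : ℝ) * Ω i := by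
        intro c hc
        have hcne : c ≠ s := hcs i hi c hc
        have hle : (C c).card ≤ n := by
          have := hlt i hi c hc
          omega
        have hIH := IH c hcne hle
        have hpc : p c = i := (Finset.mem_filter.mp hc).2.1
        rw [hpc] at hIH
        rw [Finset.sum_insert (hnotself c)]
        exact hIH
      have hsum : ∑ j ∈ C i, ω j = Ω i := by
        rw [hpart i hi, Finset.sum_biUnion hpd, Finset.sum_congr rfl hterm,
          ← Finset.sum_mul, ← Finset.sum_div, ← hcard i hi, div_self hD, one_mul]
      rw [hsum, hω i hi, hΩ i hi]
      ring
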